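/- Let W be a symmetric nonnegative weight matrix whose associated graph (edges where w_{ij} > 0) is connected. Then there exists a finite λ₀ ≥ 0 such that for all λ ≥ λ₀, the global minimum of L(A) = κ_ε‖X − A‖² + λ·κ_pen·Σ_{i<j} w_{ij}‖a_i − a_j‖ is attained at A = 1·x̄ᵀ, where x̄ is the mean of the rows of X. -/

import Mathlib

set_option maxHeartbeats 1000000

open scoped RealInnerProductSpace

/-- The graph associated with a nonnegative weight matrix: an edge between `i ≠ j`
whenever the weight between them is positive (symmetrized). -/
def weightGraph (n : ℕ) (w : Fin n → Fin n → ℝ) : SimpleGraph (Fin n) where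
  Adj i j := i ≠ j ∧ (0 < w i j ∨ 0 < w j i)
  symm := by constructor; intro i j ⟨hne, hw⟩; exact ⟨hne.symm, hw.symm⟩
  loopless := by constructor; intro i ⟨hne, _⟩; exact hne rfl

private lemma walk_norm_bound {n : ℕ} {G : SimpleGraph (Fin n)} {V : Type*}
    [SeminormedAddCommGroup V] (A : Fin n → V) (B : ℝ)
    (h : ∀ u v, G.Adj u v → ‖A u - A v‖ ≤ B) :
    ∀ {i j : Fin n} (wlk : G.Walk i j), ‖A i - A j‖ ≤ wlk.length * B := by
  intro i j wlk
  induction wlk with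
  | nil => simp
  | @cons u v x hadj q ih =>
    have h1 : ‖A u - A x‖ ≤ ‖A u - A v‖ + ‖A v - A x‖ := norm_sub_le_norm_sub_add_norm_sub _ _ _
    have h2 := h u v hadj
    have : ((SimpleGraph.Walk.cons hadj q).length : ℝ) = q.length + 1 := by
      simp [SimpleGraph.Walk.length_cons]
    rw [this]
    nlinarith [ih]

theorem min_at_grand_mean_of_connected
    (n p : ℕ) (hn : 0 < n) (X : Fin n → EuclideanSpace ℝ (Fin p))
    (κε κpen : ℝ) (hκε : 0 < κε) (hκpen : 0 < κpen)
    (w : Fin n → Fin n → ℝ) (hw : ∀ i j, 0 ≤ w i j) (hsymm : ∀ i j, w i j = w j i)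
    (hconn : (weightGraph n w).Connected)
    (L : ℝ → (Fin n → EuclideanSpace ℝ (Fin p)) → ℝ)
    (hL : ∀ lam A, L lam A = κε * (∑ i, ‖X i - A i‖ ^ 2) +
      lam * κpen * ∑ i, ∑ j, if i < j then w i j * ‖A i - A j‖ else 0) :
    ∃ lam₀ : ℝ, 0 ≤ lam₀ ∧ ∀ lam ≥ lam₀,
      ∀ A, L lam (fun _ => (n : ℝ)⁻¹ • ∑ i, X i) ≤ L lam A := by
  set G := weightGraph n w with hG
  set xbar : EuclideanSpace ℝ (Fin p) := (n : ℝ)⁻¹ • ∑ i, X i with hxbar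
  have hnR : (0 : ℝ) < n := by exact_mod_cast hn
  -- the constant function has zero penalty
  have hLconst : ∀ lam, L lam (fun _ => xbar) = κε * (∑ i, ‖X i - xbar‖ ^ 2) := by
    intro lam
    rw [hL]
    simp
  rcases eq_or_lt_of_le (show 1 ≤ n from hn) with h1 | hn2
  · -- n = 1
    refine ⟨0, le_refl 0, fun lam hlam A => ?_⟩
    have hn1 : n = 1 := h1.symm
    subst hn1
    rw [hLconst, hL]
    have hx0 : xbar = X 0 := by
      simp [hxbar]
    have hpen : ∀ (B : Fin 1 → EuclideanSpace ℝ (Fin p)),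
        (∑ i, ∑ j, if i < j then w i j * ‖B i - B j‖ else 0) = 0 := by
      intro B
      simp
    rw [hpen]
    simp [hx0, Fin.sum_univ_one]
    positivity
  · -- n ≥ 2
    have hn2' : 2 ≤ n := hn2
    -- two distinct vertices
    have h01 : (⟨0, by omega⟩ : Fin n) ≠ ⟨1, by omega⟩ := by
      simp [Fin.ext_iff]
    -- the edge set is nonempty
    have hedges : (Finset.univ.filter (fun e : Fin n × Fin n => 0 < w e.1 e.2)).Nonempty := by
      obtain ⟨wlk⟩ := hconn.preconnected ⟨0, by omega⟩ ⟨1, by omega⟩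
      cases wlk with
      | cons hadj q =>
        rename_i v
        obtain ⟨-, hpos⟩ := hadj
        have hpos' : 0 < w (⟨0, by omega⟩ : Fin n) v := by
          rcases hpos with h | h
          · exact h
          · rwa [hsymm]
        exact ⟨(⟨0, by omega⟩, v), Finset.mem_filter.mpr ⟨Finset.mem_univ _, hpos'⟩⟩
    set wmin : ℝ := (Finset.univ.filter (fun e : Fin n × Fin n => 0 < w e.1 e.2)).inf'
      hedges (fun e => w e.1 e.2) with hwmin_def
    have hwmin : 0 < wmin := by
      rw [hwmin_def, Finset.lt_inf'_iff]
      intro e he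
      exact (Finset.mem_filter.mp he).2
    set C1 : ℝ := ∑ i, ‖X i - xbar‖ with hC1_def
    have hC1 : 0 ≤ C1 := Finset.sum_nonneg fun i _ => norm_nonneg _
    refine ⟨max 0 (2 * κε * C1 * n / (κpen * wmin)), le_max_left _ _, fun lam hlam A => ?_⟩
    have hlam0 : 0 ≤ lam := le_trans (le_max_left _ _) hlam
    have hlam2 : 2 * κε * C1 * n ≤ lam * (κpen * wmin) := by
      have h := le_trans (le_max_right _ _) hlam
      rw [div_le_iff₀ (by positivity)] at h
      linarith
    set i0 : Fin n := ⟨0, by omega⟩ with hi0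
    set P : ℝ := ∑ i, ∑ j, if i < j then w i j * ‖A i - A j‖ else 0 with hP_def
    have hP : 0 ≤ P := by
      apply Finset.sum_nonneg; intro i _
      apply Finset.sum_nonneg; intro j _
      split_ifs
      · exact mul_nonneg (hw i j) (norm_nonneg _)
      · exact le_rfl
    -- single edge term bound
    have hterm : ∀ a b : Fin n, a < b → w a b * ‖A a - A b‖ ≤ P := by
      intro a b hab
      have h1 : (if a < b then w a b * ‖A a - A b‖ else 0) ≤
          ∑ j, if a < j then w a j * ‖A a - A j‖ else 0 := by
        apply Finset.single_le_sum (f := fun j => if a < j then w a j * ‖A a - A j‖ else 0)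
          (fun j _ => ?_) (Finset.mem_univ b)
        split_ifs
        · exact mul_nonneg (hw a j) (norm_nonneg _)
        · exact le_rfl
      have h2 : (∑ j, if a < j then w a j * ‖A a - A j‖ else 0) ≤ P := by
        apply Finset.single_le_sum
          (f := fun i => ∑ j, if i < j then w i j * ‖A i - A j‖ else 0)
          (fun i _ => Finset.sum_nonneg fun j _ => ?_) (Finset.mem_univ a)
        split_ifs
        · exact mul_nonneg (hw i j) (norm_nonneg _)
        · exact le_rfl
      rw [if_pos hab] at h1
      linarith
    -- adjacency gives norm bound
    have hedge : ∀ u v : Fin n, G.Adj u v → ‖A u - A v‖ ≤ P / wmin := by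
      intro u v ⟨hne, hpos⟩
      have hwuv : 0 < w u v := by
        rcases hpos with h | h
        · exact h
        · rwa [hsymm]
      have hwle : wmin ≤ w u v := by
        rw [hwmin_def]
        exact Finset.inf'_le _ (Finset.mem_filter.mpr ⟨Finset.mem_univ (u, v), hwuv⟩)
      rw [le_div_iff₀ hwmin]
      rcases lt_or_gt_of_ne hne with h | h
      · have := hterm u v h
        nlinarith [norm_nonneg (A u - A v)]
      · have := hterm v u h
        rw [norm_sub_rev]
        have hws : w u v = w v u := hsymm u v
        nlinarith [norm_nonneg (A v - A u)]
    -- any two rows are close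
    have hpair : ∀ i j : Fin n, ‖A i - A j‖ ≤ n * (P / wmin) := by
      intro i j
      obtain ⟨wlk⟩ := hconn.preconnected i j
      have hlen : ((wlk.toPath : G.Walk i j).length : ℝ) ≤ n := by
        have := SimpleGraph.Walk.IsPath.length_lt (wlk.toPath).2
        rw [Fintype.card_fin] at this
        exact_mod_cast this.le
      calc ‖A i - A j‖ ≤ ((wlk.toPath : G.Walk i j).length : ℝ) * (P / wmin) :=
            walk_norm_bound A (P / wmin) hedge _
        _ ≤ n * (P / wmin) := by
            apply mul_le_mul_of_nonneg_right hlen (div_nonneg hP hwmin.le)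
    -- deviation scale
    have huniv : (Finset.univ : Finset (Fin n)).Nonempty := ⟨i0, Finset.mem_univ i0⟩
    set m : ℝ := Finset.univ.sup' huniv (fun i => ‖A i - A i0‖) with hm_def
    have hm0 : 0 ≤ m := by
      have := Finset.le_sup' (f := fun i => ‖A i - A i0‖) (Finset.mem_univ i0)
      exact (norm_nonneg _).trans this
    obtain ⟨istar, -, hstar⟩ := Finset.exists_mem_eq_sup' huniv
      (fun i => ‖A i - A i0‖)
    rw [← hm_def] at hstar
    have hmle : ∀ i, ‖A i - A i0‖ ≤ m :=
      fun i => Finset.le_sup' (f := fun i => ‖A i - A i0‖) (Finset.mem_univ i)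
    -- penalty lower bound:  wmin * m ≤ n * P
    have hPm : wmin * m ≤ n * P := by
      have h := hpair istar i0
      rw [← hstar] at h
      have := mul_le_mul_of_nonneg_left h hwmin.le
      calc wmin * m ≤ wmin * (n * (P / wmin)) := this
        _ = n * P := by field_simp
    -- mean-zero property
    have hsum0 : ∑ i, (X i - xbar) = 0 := by
      have hns : (n : ℕ) • xbar = ∑ i, X i := by
        rw [hxbar, ← Nat.cast_smul_eq_nsmul ℝ, smul_smul,
          mul_inv_cancel₀ (ne_of_gt hnR), one_smul]
      rw [Finset.sum_sub_distrib, Finset.sum_const, Finset.card_univ, Fintype.card_fin,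
        hns, sub_self]
    set S : ℝ := ∑ i, ⟪X i - xbar, A i - xbar⟫ with hS_def
    set Q : ℝ := ∑ i, ‖A i - xbar‖ ^ 2 with hQ_def
    have hQ0 : 0 ≤ Q := Finset.sum_nonneg fun i _ => by positivity
    -- expansion of the fit term
    have hfit : (∑ i, ‖X i - A i‖ ^ 2) = (∑ i, ‖X i - xbar‖ ^ 2) - 2 * S + Q := by
      have hexp : ∀ i, ‖X i - A i‖ ^ 2 =
          ‖X i - xbar‖ ^ 2 - 2 * ⟪X i - xbar, A i - xbar⟫ + ‖A i - xbar‖ ^ 2 := by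
        intro i
        have h : X i - A i = (X i - xbar) - (A i - xbar) := by abel
        rw [h, norm_sub_sq_real]
      rw [Finset.sum_congr rfl (fun i _ => hexp i)]
      rw [Finset.sum_add_distrib, Finset.sum_sub_distrib, ← Finset.mul_sum]
    -- cross term rewrite
    have hS : S = ∑ i, ⟪X i - xbar, A i - A i0⟫ := by
      have hsplit : ∀ i : Fin n, ⟪X i - xbar, A i - xbar⟫ =
          ⟪X i - xbar, A i - A i0⟫ + ⟪X i - xbar, A i0 - xbar⟫ := by
        intro i
        rw [← inner_add_right]
        congr 1
        abel
      rw [hS_def, Finset.sum_congr rfl (fun i _ => hsplit i), Finset.sum_add_distrib,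
        ← sum_inner, hsum0, inner_zero_left, add_zero]
    have hSbound : S ≤ C1 * m := by
      rw [hS, hC1_def, Finset.sum_mul]
      apply Finset.sum_le_sum
      intro i _
      calc ⟪X i - xbar, A i - A i0⟫ ≤ ‖X i - xbar‖ * ‖A i - A i0‖ :=
            real_inner_le_norm _ _
        _ ≤ ‖X i - xbar‖ * m := mul_le_mul_of_nonneg_left (hmle i) (norm_nonneg _)
    -- quadratic lower bound:  m^2 ≤ 4 Q
    have hQm : m ^ 2 ≤ 4 * Q := by
      have ha : ‖A istar - xbar‖ ^ 2 ≤ Q :=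
        Finset.single_le_sum (f := fun i => ‖A i - xbar‖ ^ 2)
          (fun i _ => by positivity) (Finset.mem_univ istar)
      have hb : ‖A i0 - xbar‖ ^ 2 ≤ Q :=
        Finset.single_le_sum (f := fun i => ‖A i - xbar‖ ^ 2)
          (fun i _ => by positivity) (Finset.mem_univ i0)
      have htri : m ≤ ‖A istar - xbar‖ + ‖A i0 - xbar‖ := by
        rw [hstar]
        calc ‖A istar - A i0‖ ≤ ‖A istar - xbar‖ + ‖xbar - A i0‖ :=
              norm_sub_le_norm_sub_add_norm_sub _ _ _
          _ = ‖A istar - xbar‖ + ‖A i0 - xbar‖ := by rw [norm_sub_rev xbar]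
      have h6 : m ^ 2 ≤ (‖A istar - xbar‖ + ‖A i0 - xbar‖) ^ 2 :=
        pow_le_pow_left₀ hm0 htri 2
      nlinarith [sq_nonneg (‖A istar - xbar‖ - ‖A i0 - xbar‖), h6, ha, hb]
    -- conclude
    rw [hLconst, hL, ← hP_def]
    clear_value P m S Q
    have key : 0 ≤ κε * (Q - 2 * S) + lam * κpen * P := by
      have h1 : lam * κpen * (wmin * m) ≤ lam * κpen * ((n : ℝ) * P) :=
        mul_le_mul_of_nonneg_left hPm (by positivity)
      have h2 : (2 * κε * C1 * (n : ℝ)) * m ≤ (lam * (κpen * wmin)) * m :=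
        mul_le_mul_of_nonneg_right hlam2 hm0
      have h3 : (κε * (n : ℝ)) * m ^ 2 ≤ (κε * (n : ℝ)) * (4 * Q) :=
        mul_le_mul_of_nonneg_left hQm (by positivity)
      have h4 : (κε * (n : ℝ)) * S ≤ (κε * (n : ℝ)) * (C1 * m) :=
        mul_le_mul_of_nonneg_left hSbound (by positivity)
      have h5 : 0 ≤ (κε * (n : ℝ)) * m ^ 2 := by positivity
      have hmain : (n : ℝ) * 0 ≤ (n : ℝ) * (κε * (Q - 2 * S) + lam * κpen * P) := by
        linarith [h1, h2, h3, h4, h5]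
      exact le_of_mul_le_mul_left hmain hnR
    rw [hfit]
    linarith [key]
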